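/- Let n > 3. The Lie algebra of derivations of the Poisson algebra P₁,₅ⁿ has dimension n. Moreover, a linear map φ is a derivation of P₁,₅ⁿ if and only if there exist λ₂,…,λₙ, μ ∈ ℂ such that φ(e₁) = Σ_{k=2}^{n} λ_k e_k, φ(e_i) = i·Σ_{k=i+1}^{n−1} λ_{k−i+1} e_k for 2 ≤ i ≤ n−1, and φ(eₙ) = −λₙ e_{n−2} + μ e_{n−1}. -/

import Mathlib

open scoped BigOperators

/-- The bilinear map on `Fin n → ℂ` determined by structure constants `c`. -/
noncomputable def sb {n : ℕ} (c : Fin n → Fin n → Fin n → ℂ) :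
    (Fin n → ℂ) →ₗ[ℂ] (Fin n → ℂ) →ₗ[ℂ] (Fin n → ℂ) :=
  LinearMap.mk₂ ℂ (fun x y k => ∑ a, ∑ b, c a b k * (x a * y b))
    (fun x x' y => by
      funext k
      simp [add_mul, mul_add, Finset.sum_add_distrib])
    (fun r x y => by
      funext k
      simp only [Pi.smul_apply, smul_eq_mul, Finset.mul_sum]
      exact Finset.sum_congr rfl fun a _ => Finset.sum_congr rfl fun b _ => by ring)
    (fun x y y' => by
      funext k
      simp [mul_add, Finset.sum_add_distrib])
    (fun r x y => by
      funext k
      simp only [Pi.smul_apply, smul_eq_mul, Finset.mul_sum]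
      exact Finset.sum_congr rfl fun a _ => Finset.sum_congr rfl fun b _ => by ring)

/-- The Lie algebra (here: submodule) of derivations of the Poisson algebra on
`Fin n → ℂ` with multiplication `m` and bracket `b`. -/
noncomputable def derivs {n : ℕ}
    (m b : (Fin n → ℂ) →ₗ[ℂ] (Fin n → ℂ) →ₗ[ℂ] (Fin n → ℂ)) :
    Submodule ℂ ((Fin n → ℂ) →ₗ[ℂ] (Fin n → ℂ)) where
  carrier := {φ | (∀ x y, φ (m x y) = m (φ x) y + m x (φ y)) ∧
      (∀ x y, φ (b x y) = b (φ x) y + b x (φ y))}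
  add_mem' := by
    rintro φ ψ ⟨h1, h2⟩ ⟨g1, g2⟩
    refine ⟨fun x y => ?_, fun x y => ?_⟩ <;>
      simp only [LinearMap.add_apply, map_add, h1, h2, g1, g2] <;> abel
  zero_mem' := by
    refine ⟨fun x y => ?_, fun x y => ?_⟩ <;> simp
  smul_mem' := by
    rintro r φ ⟨h1, h2⟩
    refine ⟨fun x y => ?_, fun x y => ?_⟩ <;>
      simp only [LinearMap.smul_apply, map_smul, h1, h2, smul_add]

/-- Multiplication of `P₁,₅ⁿ`: `e_i · e_j = e_{i+j}` for `2 ≤ i+j ≤ n−1`,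
`i,j ≤ n−1`, together with `eₙ·eₙ = e_{n−1}`. -/
noncomputable def mu12 (n : ℕ) : (Fin n → ℂ) →ₗ[ℂ] (Fin n → ℂ) →ₗ[ℂ] (Fin n → ℂ) :=
  sb (fun a b k =>
    (if (a : ℕ) + (b : ℕ) + 1 = (k : ℕ) ∧ (k : ℕ) + 2 ≤ n then 1 else 0) +
    (if (a : ℕ) + 1 = n ∧ (b : ℕ) + 1 = n ∧ (k : ℕ) + 2 = n then 1 else 0))

/-- The bracket of `P₁,₅ⁿ`: `{e₁,eₙ} = e_{n−1}`. -/
noncomputable def brB (n : ℕ) : (Fin n → ℂ) →ₗ[ℂ] (Fin n → ℂ) →ₗ[ℂ] (Fin n → ℂ) :=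
  sb (fun a b k =>
    if (a : ℕ) = 0 ∧ (b : ℕ) + 1 = n ∧ (k : ℕ) + 2 = n then 1
    else if (a : ℕ) + 1 = n ∧ (b : ℕ) = 0 ∧ (k : ℕ) + 2 = n then -1 else 0)


namespace P15

lemma fcg {n : ℕ} {α : Type*} (f : Fin n → α) {i j : ℕ} {h : i < n} {h' : j < n}
    (e : i = j) : f ⟨i, h⟩ = f ⟨j, h'⟩ := by subst e; rfl

lemma sum_eq_single_val {n : ℕ} (t : ℕ) (ht : t < n) (g : Fin n → ℂ) :
    (∑ a : Fin n, if (a : ℕ) = t then g a else 0) = g ⟨t, ht⟩ := by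
  have h1 : (∑ a : Fin n, if (a : ℕ) = t then g a else 0)
      = ∑ a : Fin n, if a = (⟨t, ht⟩ : Fin n) then g a else 0 :=
    Finset.sum_congr rfl fun a _ =>
      if_congr (show ((a : ℕ) = t) ↔ (a = (⟨t, ht⟩ : Fin n)) from by rw [Fin.ext_iff]) rfl rfl
  rw [h1, Finset.sum_ite_eq' Finset.univ (⟨t, ht⟩ : Fin n) g, if_pos (Finset.mem_univ _)]

lemma sum_ite' {n : ℕ} (P : Fin n → Prop) [DecidablePred P] (x : Fin n → ℂ)
    (C : Prop) [Decidable C] (t : ℕ) (ht : t < n)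
    (hiff : ∀ a : Fin n, P a ↔ ((a : ℕ) = t ∧ C)) :
    (∑ a : Fin n, if P a then x a else 0) = if C then x ⟨t, ht⟩ else 0 := by
  split_ifs with hC
  · rw [Finset.sum_congr rfl fun a _ =>
      if_congr (((hiff a).trans (and_iff_left hC))) rfl rfl]
    exact sum_eq_single_val t ht x
  · exact Finset.sum_eq_zero fun a _ => if_neg (fun h => hC ((hiff a).1 h).2)


variable {n : ℕ}

lemma mu12_apply_single_right (hn : 3 < n) (x : Fin n → ℂ) (b k : Fin n) :
    mu12 n x (Pi.single b 1) k =
      (if (b : ℕ) + 1 ≤ (k : ℕ) ∧ (k : ℕ) + 2 ≤ n then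
        x ⟨(k : ℕ) - (b : ℕ) - 1, by have := k.isLt; omega⟩ else 0) +
      (if (b : ℕ) + 1 = n ∧ (k : ℕ) + 2 = n then x ⟨n - 1, (by omega : n > n - 1)⟩ else 0) := by
  have hk := k.isLt
  simp only [mu12, sb, LinearMap.mk₂_apply]
  simp only [Pi.single_apply, mul_ite, mul_one, mul_zero]
  simp only [Finset.sum_ite_eq', Finset.mem_univ, if_true]
  simp only [add_mul, Finset.sum_add_distrib, ite_mul, one_mul, zero_mul]
  rw [sum_ite' _ x ((b : ℕ) + 1 ≤ (k : ℕ) ∧ (k : ℕ) + 2 ≤ n)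
        ((k : ℕ) - (b : ℕ) - 1) (by omega) (fun a => by omega),
      sum_ite' _ x ((b : ℕ) + 1 = n ∧ (k : ℕ) + 2 = n) (n - 1) (by omega)
        (fun a => by omega)]

lemma mu12_apply_single_left (hn : 3 < n) (y : Fin n → ℂ) (a k : Fin n) :
    mu12 n (Pi.single a 1) y k =
      (if (a : ℕ) + 1 ≤ (k : ℕ) ∧ (k : ℕ) + 2 ≤ n then
        y ⟨(k : ℕ) - (a : ℕ) - 1, by have := k.isLt; omega⟩ else 0) +
      (if (a : ℕ) + 1 = n ∧ (k : ℕ) + 2 = n then y ⟨n - 1, (by omega : n > n - 1)⟩ else 0) := by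
  have hk := k.isLt
  simp only [mu12, sb, LinearMap.mk₂_apply]
  rw [Finset.sum_comm]
  simp only [Pi.single_apply, mul_ite, ite_mul, mul_one, mul_zero, one_mul, zero_mul]
  simp only [Finset.sum_ite_eq', Finset.mem_univ, if_true]
  simp only [add_mul, Finset.sum_add_distrib, ite_mul, one_mul, zero_mul]
  rw [sum_ite' _ y ((a : ℕ) + 1 ≤ (k : ℕ) ∧ (k : ℕ) + 2 ≤ n)
        ((k : ℕ) - (a : ℕ) - 1) (by omega) (fun b => by omega),
      sum_ite' _ y ((a : ℕ) + 1 = n ∧ (k : ℕ) + 2 = n) (n - 1) (by omega)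
        (fun b => by omega)]

lemma brB_apply_single_right (hn : 3 < n) (x : Fin n → ℂ) (b k : Fin n) :
    brB n x (Pi.single b 1) k =
      (if (b : ℕ) + 1 = n ∧ (k : ℕ) + 2 = n then x ⟨0, (by omega : n > 0)⟩ else 0) +
      (if (b : ℕ) = 0 ∧ (k : ℕ) + 2 = n then -(x ⟨n - 1, (by omega : n > n - 1)⟩) else 0) := by
  have hk := k.isLt
  simp only [brB, sb, LinearMap.mk₂_apply]
  simp only [Pi.single_apply, mul_ite, mul_one, mul_zero]
  simp only [Finset.sum_ite_eq', Finset.mem_univ, if_true]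
  have hsplit : ∀ a : Fin n,
      (if (a : ℕ) = 0 ∧ (b : ℕ) + 1 = n ∧ (k : ℕ) + 2 = n then (1 : ℂ)
        else if (a : ℕ) + 1 = n ∧ (b : ℕ) = 0 ∧ (k : ℕ) + 2 = n then -1 else 0) * x a
      = (if (a : ℕ) = 0 ∧ (b : ℕ) + 1 = n ∧ (k : ℕ) + 2 = n then x a else 0)
      + (if (a : ℕ) + 1 = n ∧ (b : ℕ) = 0 ∧ (k : ℕ) + 2 = n then -(x a) else 0) := by
    intro a
    split_ifs with h1 h2 <;> first | (exfalso; omega) | ring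
  rw [Finset.sum_congr rfl fun a _ => hsplit a, Finset.sum_add_distrib]
  rw [sum_ite' _ x ((b : ℕ) + 1 = n ∧ (k : ℕ) + 2 = n) 0 (by omega) (fun a => by omega),
      sum_ite' _ (fun a => -(x a)) ((b : ℕ) = 0 ∧ (k : ℕ) + 2 = n) (n - 1) (by omega)
        (fun a => by omega)]

lemma brB_apply_single_left (hn : 3 < n) (y : Fin n → ℂ) (a k : Fin n) :
    brB n (Pi.single a 1) y k =
      (if (a : ℕ) = 0 ∧ (k : ℕ) + 2 = n then y ⟨n - 1, (by omega : n > n - 1)⟩ else 0) +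
      (if (a : ℕ) + 1 = n ∧ (k : ℕ) + 2 = n then -(y ⟨0, (by omega : n > 0)⟩) else 0) := by
  have hk := k.isLt
  simp only [brB, sb, LinearMap.mk₂_apply]
  rw [Finset.sum_comm]
  simp only [Pi.single_apply, mul_ite, ite_mul, mul_one, mul_zero, one_mul, zero_mul]
  simp only [Finset.sum_ite_eq', Finset.mem_univ, if_true]
  have hsplit : ∀ b : Fin n,
      (if (a : ℕ) = 0 ∧ (b : ℕ) + 1 = n ∧ (k : ℕ) + 2 = n then y b
        else if (a : ℕ) + 1 = n ∧ (b : ℕ) = 0 ∧ (k : ℕ) + 2 = n then -1 * y b else 0)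
      = (if (a : ℕ) = 0 ∧ (b : ℕ) + 1 = n ∧ (k : ℕ) + 2 = n then y b else 0)
      + (if (a : ℕ) + 1 = n ∧ (b : ℕ) = 0 ∧ (k : ℕ) + 2 = n then -(y b) else 0) := by
    intro b
    split_ifs with h1 h2 <;> first | (exfalso; omega) | ring
  rw [Finset.sum_congr rfl fun b _ => hsplit b, Finset.sum_add_distrib]
  rw [sum_ite' _ y ((a : ℕ) = 0 ∧ (k : ℕ) + 2 = n) (n - 1) (by omega) (fun b => by omega),
      sum_ite' _ (fun b => -(y b)) ((a : ℕ) + 1 = n ∧ (k : ℕ) + 2 = n) 0 (by omega)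
        (fun b => by omega)]

lemma mu12_single_single (hn : 3 < n) (a b : Fin n) :
    mu12 n (Pi.single a 1) (Pi.single b 1) =
      if h : (a : ℕ) + (b : ℕ) + 3 ≤ n then
        Pi.single (⟨(a : ℕ) + (b : ℕ) + 1, by omega⟩ : Fin n) 1
      else if (a : ℕ) + 1 = n ∧ (b : ℕ) + 1 = n then
        Pi.single (⟨n - 2, (by omega : n > n - 2)⟩ : Fin n) 1
      else 0 := by
  funext k
  have hk := k.isLt; have ha := a.isLt; have hb := b.isLt
  rw [mu12_apply_single_right hn]
  simp only [Pi.single_apply, Fin.ext_iff, Fin.val_mk, ite_apply, dite_apply,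
    Pi.zero_apply]
  split_ifs <;> first | rfl | (exfalso; omega) | norm_num

lemma brB_single_single (hn : 3 < n) (a b : Fin n) :
    brB n (Pi.single a 1) (Pi.single b 1) =
      if (a : ℕ) = 0 ∧ (b : ℕ) + 1 = n then Pi.single (⟨n - 2, (by omega : n > n - 2)⟩ : Fin n) 1
      else if (a : ℕ) + 1 = n ∧ (b : ℕ) = 0 then -Pi.single (⟨n - 2, (by omega : n > n - 2)⟩ : Fin n) 1
      else 0 := by
  funext k
  have hk := k.isLt; have ha := a.isLt; have hb := b.isLt
  rw [brB_apply_single_right hn]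
  simp only [Pi.single_apply, Fin.ext_iff, Fin.val_mk, ite_apply, Pi.zero_apply,
    Pi.neg_apply]
  split_ifs <;> first | rfl | (exfalso; omega) | norm_num

/-- The coordinate form of the multiplicative derivation equation at `(a, b, k)`. -/
def EM (hn : 3 < n) (D : Fin n → Fin n → ℂ) (a b k : Fin n) : Prop :=
  (if h : (a : ℕ) + (b : ℕ) + 3 ≤ n then
      D ⟨(a : ℕ) + (b : ℕ) + 1, by omega⟩ k
    else if (a : ℕ) + 1 = n ∧ (b : ℕ) + 1 = n then D ⟨n - 2, (by omega : n > n - 2)⟩ k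
    else 0)
  = ((if (b : ℕ) + 1 ≤ (k : ℕ) ∧ (k : ℕ) + 2 ≤ n then
        D a ⟨(k : ℕ) - (b : ℕ) - 1, by have := k.isLt; omega⟩ else 0) +
     (if (b : ℕ) + 1 = n ∧ (k : ℕ) + 2 = n then D a ⟨n - 1, (by omega : n > n - 1)⟩ else 0)) +
    ((if (a : ℕ) + 1 ≤ (k : ℕ) ∧ (k : ℕ) + 2 ≤ n then
        D b ⟨(k : ℕ) - (a : ℕ) - 1, by have := k.isLt; omega⟩ else 0) +
     (if (a : ℕ) + 1 = n ∧ (k : ℕ) + 2 = n then D b ⟨n - 1, (by omega : n > n - 1)⟩ else 0))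

/-- The coordinate form of the bracket derivation equation at `(a, b, k)`. -/
def EB (hn : 3 < n) (D : Fin n → Fin n → ℂ) (a b k : Fin n) : Prop :=
  (if (a : ℕ) = 0 ∧ (b : ℕ) + 1 = n then D ⟨n - 2, (by omega : n > n - 2)⟩ k
    else if (a : ℕ) + 1 = n ∧ (b : ℕ) = 0 then -(D ⟨n - 2, (by omega : n > n - 2)⟩ k)
    else 0)
  = ((if (b : ℕ) + 1 = n ∧ (k : ℕ) + 2 = n then D a ⟨0, (by omega : n > 0)⟩ else 0) +
     (if (b : ℕ) = 0 ∧ (k : ℕ) + 2 = n then -(D a ⟨n - 1, (by omega : n > n - 1)⟩) else 0)) +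
    ((if (a : ℕ) = 0 ∧ (k : ℕ) + 2 = n then D b ⟨n - 1, (by omega : n > n - 1)⟩ else 0) +
     (if (a : ℕ) + 1 = n ∧ (k : ℕ) + 2 = n then -(D b ⟨0, (by omega : n > 0)⟩) else 0))

lemma mul_single_iff (hn : 3 < n) (φ : (Fin n → ℂ) →ₗ[ℂ] (Fin n → ℂ)) (a b : Fin n) :
    φ (mu12 n (Pi.single a 1) (Pi.single b 1))
      = mu12 n (φ (Pi.single a 1)) (Pi.single b 1)
        + mu12 n (Pi.single a 1) (φ (Pi.single b 1))
    ↔ ∀ k : Fin n, EM hn (fun i j => φ (Pi.single i 1) j) a b k := by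
  rw [mu12_single_single hn a b, funext_iff]
  refine forall_congr' fun k => ?_
  rw [Pi.add_apply, mu12_apply_single_right hn, mu12_apply_single_left hn]
  simp only [EM]
  split_ifs <;> simp only [map_zero, Pi.zero_apply, map_neg] <;> exact Iff.rfl

lemma br_single_iff (hn : 3 < n) (φ : (Fin n → ℂ) →ₗ[ℂ] (Fin n → ℂ)) (a b : Fin n) :
    φ (brB n (Pi.single a 1) (Pi.single b 1))
      = brB n (φ (Pi.single a 1)) (Pi.single b 1)
        + brB n (Pi.single a 1) (φ (Pi.single b 1))
    ↔ ∀ k : Fin n, EB hn (fun i j => φ (Pi.single i 1) j) a b k := by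
  rw [brB_single_single hn a b, funext_iff]
  refine forall_congr' fun k => ?_
  rw [Pi.add_apply, brB_apply_single_right hn, brB_apply_single_left hn]
  simp only [EB]
  split_ifs <;> simp only [map_zero, Pi.zero_apply, map_neg, Pi.neg_apply] <;> exact Iff.rfl

/-- The general solution for derivations, in coordinates. -/
def DsolF (n : ℕ) (lam : ℕ → ℂ) (μ : ℂ) (a k : Fin n) : ℂ :=
  if (a : ℕ) = 0 then (if 1 ≤ (k : ℕ) then lam ((k : ℕ) + 1) else 0)
  else if (a : ℕ) ≤ n - 2 then
    (((a : ℕ) : ℂ) + 1) *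
      (if (a : ℕ) + 1 ≤ (k : ℕ) ∧ (k : ℕ) ≤ n - 2 then lam ((k : ℕ) - (a : ℕ) + 1) else 0)
  else (if (k : ℕ) = n - 3 then -lam n else 0) + (if (k : ℕ) = n - 2 then μ else 0)

lemma DsolF_zero (lam : ℕ → ℂ) (μ : ℂ) (a k : Fin n) (ha : (a : ℕ) = 0) :
    DsolF n lam μ a k = (if 1 ≤ (k : ℕ) then lam ((k : ℕ) + 1) else 0) := by
  rw [DsolF, if_pos ha]

lemma DsolF_mid (lam : ℕ → ℂ) (μ : ℂ) (a k : Fin n) (h1 : 1 ≤ (a : ℕ)) (h2 : (a : ℕ) ≤ n - 2) :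
    DsolF n lam μ a k = (((a : ℕ) : ℂ) + 1) *
      (if (a : ℕ) + 1 ≤ (k : ℕ) ∧ (k : ℕ) ≤ n - 2 then lam ((k : ℕ) - (a : ℕ) + 1) else 0) := by
  rw [DsolF, if_neg (by omega), if_pos h2]

lemma DsolF_last (lam : ℕ → ℂ) (μ : ℂ) (a k : Fin n) (hn : 3 < n) (ha : (a : ℕ) + 1 = n) :
    DsolF n lam μ a k =
      (if (k : ℕ) = n - 3 then -lam n else 0) + (if (k : ℕ) = n - 2 then μ else 0) := by
  rw [DsolF, if_neg (by omega), if_neg (by omega)]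

lemma tri (hn : 3 < n) (x : Fin n) :
    (x : ℕ) = 0 ∨ (1 ≤ (x : ℕ) ∧ (x : ℕ) ≤ n - 2) ∨ ((x : ℕ) + 1 = n) := by
  have := x.isLt; omega

lemma DsolF_rown2 (hn : 3 < n) (lam : ℕ → ℂ) (μ : ℂ) (k : Fin n) :
    DsolF n lam μ (⟨n - 2, (by omega : n > n - 2)⟩ : Fin n) k = 0 := by
  rw [DsolF_mid lam μ _ k (by simp only [Fin.val_mk]; omega) (by simp only [Fin.val_mk]; omega),
    if_neg (by simp only [Fin.val_mk]; have := k.isLt; omega), mul_zero]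

lemma DsolF_col0 (hn : 3 < n) (lam : ℕ → ℂ) (μ : ℂ) (a : Fin n) :
    DsolF n lam μ a ⟨0, (by omega : n > 0)⟩ = 0 := by
  rcases tri hn a with h | h | h
  · rw [DsolF_zero lam μ a _ h, if_neg (by simp only [Fin.val_mk]; omega)]
  · rw [DsolF_mid lam μ a _ h.1 h.2, if_neg (by simp only [Fin.val_mk]; omega), mul_zero]
  · rw [DsolF_last lam μ a _ hn h]
    simp only [Fin.val_mk]
    rw [if_neg (by omega), if_neg (by omega), add_zero]

lemma DsolF_coln1 (hn : 3 < n) (lam : ℕ → ℂ) (μ : ℂ) (a : Fin n) :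
    DsolF n lam μ a ⟨n - 1, (by omega : n > n - 1)⟩ = if (a : ℕ) = 0 then lam n else 0 := by
  rcases tri hn a with h | h | h
  · rw [DsolF_zero lam μ a _ h]
    simp only [Fin.val_mk]
    rw [if_pos (by omega), if_pos h, show n - 1 + 1 = n from by omega]
  · rw [DsolF_mid lam μ a _ h.1 h.2, if_neg (by simp only [Fin.val_mk]; omega), mul_zero,
      if_neg (by omega)]
  · rw [DsolF_last lam μ a _ hn h]
    simp only [Fin.val_mk]
    rw [if_neg (by omega), if_neg (by omega), if_neg (by omega), add_zero]

lemma verifyB (hn : 3 < n) (lam : ℕ → ℂ) (μ : ℂ) :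
    ∀ a b k : Fin n, EB hn (DsolF n lam μ) a b k := by
  intro a b k
  have hk := k.isLt; have ha' := a.isLt; have hb' := b.isLt
  simp only [EB]
  rw [DsolF_rown2 hn lam μ k, DsolF_col0 hn lam μ a, DsolF_col0 hn lam μ b,
    DsolF_coln1 hn lam μ a, DsolF_coln1 hn lam μ b]
  simp only [neg_zero, ite_self]
  split_ifs <;> first | (exfalso; omega) | norm_num

lemma verifyM (hn : 3 < n) (lam : ℕ → ℂ) (μ : ℂ) :
    ∀ a b k : Fin n, EM hn (DsolF n lam μ) a b k := by
  intro a b k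
  have hk := k.isLt; have ha' := a.isLt; have hb' := b.isLt
  simp only [EM]
  rw [DsolF_coln1 hn lam μ a, DsolF_coln1 hn lam μ b]
  rcases tri hn a with ha | ha | ha <;> rcases tri hn b with hb | hb | hb
  · -- a = 0, b = 0
    rw [if_neg (show ¬((b : ℕ) + 1 = n ∧ (k : ℕ) + 2 = n) from by omega),
      if_neg (show ¬((a : ℕ) + 1 = n ∧ (k : ℕ) + 2 = n) from by omega),
      dif_pos (by omega),
      DsolF_mid lam μ ⟨(a : ℕ) + (b : ℕ) + 1, by omega⟩ k
        (by simp only [Fin.val_mk]; omega) (by simp only [Fin.val_mk]; omega),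
      DsolF_zero lam μ a _ ha, DsolF_zero lam μ b _ hb]
    simp only [Fin.val_mk, ha, hb, zero_add, Nat.sub_zero]
    split_ifs <;> first | (exfalso; omega) | (push_cast; ring) | norm_num
  · -- a = 0, b mid
    rw [if_neg (show ¬((b : ℕ) + 1 = n ∧ (k : ℕ) + 2 = n) from by omega),
      if_neg (show ¬((a : ℕ) + 1 = n ∧ (k : ℕ) + 2 = n) from by omega)]
    by_cases pab : (a : ℕ) + (b : ℕ) + 3 ≤ n
    · rw [dif_pos pab,
        DsolF_mid lam μ ⟨(a : ℕ) + (b : ℕ) + 1, by omega⟩ k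
          (by simp only [Fin.val_mk]; omega) (by simp only [Fin.val_mk]; omega),
        DsolF_zero lam μ a _ ha, DsolF_mid lam μ b _ hb.1 hb.2]
      simp only [Fin.val_mk, ha, zero_add, Nat.sub_zero]
      split_ifs <;>
        first
        | (exfalso; omega)
        | (rw [show (k : ℕ) - (b : ℕ) - 1 + 1 = (k : ℕ) - ((b : ℕ) + 1) + 1 from by omega,
            show (k : ℕ) - 1 - (b : ℕ) + 1 = (k : ℕ) - ((b : ℕ) + 1) + 1 from by omega];
           push_cast; ring)
        | norm_num
    · rw [dif_neg pab, if_neg (by omega),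
        DsolF_zero lam μ a _ ha, DsolF_mid lam μ b _ hb.1 hb.2]
      simp only [Fin.val_mk, ha, zero_add, Nat.sub_zero]
      split_ifs <;> first | (exfalso; omega) | norm_num
  · -- a = 0, b last
    rw [dif_neg (by omega), if_neg (by omega),
      if_neg (show ¬((b : ℕ) + 1 ≤ (k : ℕ) ∧ (k : ℕ) + 2 ≤ n) from by omega),
      if_neg (show ¬((a : ℕ) + 1 = n ∧ (k : ℕ) + 2 = n) from by omega),
      if_pos ha, DsolF_last lam μ b _ hn hb]
    simp only [Fin.val_mk, ha, zero_add, Nat.sub_zero]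
    split_ifs <;>
      first
      | (exfalso; omega)
      | (rw [show n - 1 + 1 = n from by omega]; ring)
      | norm_num
  · -- a mid, b = 0
    rw [if_neg (show ¬((b : ℕ) + 1 = n ∧ (k : ℕ) + 2 = n) from by omega),
      if_neg (show ¬((a : ℕ) + 1 = n ∧ (k : ℕ) + 2 = n) from by omega)]
    by_cases pab : (a : ℕ) + (b : ℕ) + 3 ≤ n
    · rw [dif_pos pab,
        DsolF_mid lam μ ⟨(a : ℕ) + (b : ℕ) + 1, by omega⟩ k
          (by simp only [Fin.val_mk]; omega) (by simp only [Fin.val_mk]; omega),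
        DsolF_zero lam μ b _ hb, DsolF_mid lam μ a _ ha.1 ha.2]
      simp only [Fin.val_mk, hb, zero_add, Nat.sub_zero, add_zero]
      split_ifs <;>
        first
        | (exfalso; omega)
        | (rw [show (k : ℕ) - 1 - (a : ℕ) + 1 = (k : ℕ) - ((a : ℕ) + 1) + 1 from by omega,
            show (k : ℕ) - (a : ℕ) - 1 + 1 = (k : ℕ) - ((a : ℕ) + 1) + 1 from by omega];
           push_cast; ring)
        | norm_num
    · rw [dif_neg pab, if_neg (by omega),
        DsolF_zero lam μ b _ hb, DsolF_mid lam μ a _ ha.1 ha.2]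
      simp only [Fin.val_mk, hb, zero_add, Nat.sub_zero, add_zero]
      split_ifs <;> first | (exfalso; omega) | norm_num
  · -- a mid, b mid
    rw [if_neg (show ¬((b : ℕ) + 1 = n ∧ (k : ℕ) + 2 = n) from by omega),
      if_neg (show ¬((a : ℕ) + 1 = n ∧ (k : ℕ) + 2 = n) from by omega)]
    by_cases pab : (a : ℕ) + (b : ℕ) + 3 ≤ n
    · rw [dif_pos pab,
        DsolF_mid lam μ ⟨(a : ℕ) + (b : ℕ) + 1, by omega⟩ k
          (by simp only [Fin.val_mk]; omega) (by simp only [Fin.val_mk]; omega),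
        DsolF_mid lam μ a _ ha.1 ha.2, DsolF_mid lam μ b _ hb.1 hb.2]
      simp only [Fin.val_mk]
      split_ifs <;>
        first
        | (exfalso; omega)
        | (rw [show (k : ℕ) - (b : ℕ) - 1 - (a : ℕ) + 1
                = (k : ℕ) - ((a : ℕ) + (b : ℕ) + 1) + 1 from by omega,
            show (k : ℕ) - (a : ℕ) - 1 - (b : ℕ) + 1
                = (k : ℕ) - ((a : ℕ) + (b : ℕ) + 1) + 1 from by omega];
           push_cast; ring)
        | norm_num
    · rw [dif_neg pab, if_neg (by omega),
        DsolF_mid lam μ a _ ha.1 ha.2, DsolF_mid lam μ b _ hb.1 hb.2]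
      simp only [Fin.val_mk]
      split_ifs <;> first | (exfalso; omega) | norm_num
  · -- a mid, b last
    rw [dif_neg (by omega), if_neg (by omega),
      if_neg (show ¬((b : ℕ) + 1 ≤ (k : ℕ) ∧ (k : ℕ) + 2 ≤ n) from by omega),
      if_neg (show ¬((a : ℕ) + 1 = n ∧ (k : ℕ) + 2 = n) from by omega),
      if_neg (show ¬((a : ℕ) = 0) from by omega),
      DsolF_last lam μ b _ hn hb]
    simp only [Fin.val_mk]
    split_ifs <;> first | (exfalso; omega) | norm_num
  · -- a last, b = 0
    rw [dif_neg (by omega), if_neg (by omega),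
      if_neg (show ¬((a : ℕ) + 1 ≤ (k : ℕ) ∧ (k : ℕ) + 2 ≤ n) from by omega),
      if_neg (show ¬((b : ℕ) + 1 = n ∧ (k : ℕ) + 2 = n) from by omega),
      if_pos hb, DsolF_last lam μ a _ hn ha]
    simp only [Fin.val_mk, hb, Nat.sub_zero]
    split_ifs <;>
      first
      | (exfalso; omega)
      | (rw [show n - 1 + 1 = n from by omega]; ring)
      | norm_num
  · -- a last, b mid
    rw [dif_neg (by omega), if_neg (by omega),
      if_neg (show ¬((a : ℕ) + 1 ≤ (k : ℕ) ∧ (k : ℕ) + 2 ≤ n) from by omega),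
      if_neg (show ¬((b : ℕ) + 1 = n ∧ (k : ℕ) + 2 = n) from by omega),
      if_neg (show ¬((b : ℕ) = 0) from by omega),
      DsolF_last lam μ a _ hn ha]
    simp only [Fin.val_mk]
    split_ifs <;> first | (exfalso; omega) | norm_num
  · -- a last, b last
    rw [dif_neg (by omega), if_pos (show (a : ℕ) + 1 = n ∧ (b : ℕ) + 1 = n from ⟨ha, hb⟩),
      DsolF_rown2 hn lam μ k,
      if_neg (show ¬((a : ℕ) + 1 ≤ (k : ℕ) ∧ (k : ℕ) + 2 ≤ n) from by omega),
      if_neg (show ¬((b : ℕ) + 1 ≤ (k : ℕ) ∧ (k : ℕ) + 2 ≤ n) from by omega),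
      if_neg (show ¬((a : ℕ) = 0) from by omega),
      if_neg (show ¬((b : ℕ) = 0) from by omega)]
    split_ifs <;> first | (exfalso; omega) | norm_num

set_option maxHeartbeats 1600000 in
lemma solve (hn : 3 < n) (D : Fin n → Fin n → ℂ)
    (HM : ∀ a b k : Fin n, EM hn D a b k) (HB : ∀ a b k : Fin n, EB hn D a b k) :
    ∀ a k : Fin n, D a k = DsolF n
      (fun j => if h : 2 ≤ j ∧ j ≤ n then D ⟨0, (by omega : n > 0)⟩ ⟨j - 1, by omega⟩ else 0)
      (D ⟨n - 1, (by omega : n > n - 1)⟩ ⟨n - 2, (by omega : n > n - 2)⟩) a k := by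
  -- clean instance of the multiplication equation with a = e₁
  have HM0 : ∀ (b : ℕ) (hb : b + 3 ≤ n) (k : Fin n),
      D ⟨b + 1, by omega⟩ k
        = (if b + 1 ≤ (k : ℕ) ∧ (k : ℕ) + 2 ≤ n then
            D ⟨0, by omega⟩ ⟨(k : ℕ) - b - 1, by have := k.isLt; omega⟩ else 0)
        + (if 1 ≤ (k : ℕ) ∧ (k : ℕ) + 2 ≤ n then
            D ⟨b, by omega⟩ ⟨(k : ℕ) - 1, by have := k.isLt; omega⟩ else 0) := by
    intro b hb k
    have h := HM ⟨0, by omega⟩ ⟨b, by omega⟩ k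
    simp only [EM, Fin.val_mk] at h
    rw [dif_pos (by omega),
      if_neg (show ¬(b + 1 = n ∧ (k : ℕ) + 2 = n) from by omega),
      if_neg (show ¬(0 + 1 = n ∧ (k : ℕ) + 2 = n) from by omega)] at h
    simp only [zero_add, add_zero, Nat.sub_zero] at h
    exact h
  -- the key inductive claim for the middle rows
  have Cmid : ∀ i : ℕ, 1 ≤ i → ∀ (hi : i < n), i ≤ n - 2 → ∀ k : Fin n,
      D ⟨i, hi⟩ k = ((i : ℂ) + 1) *
        (if i ≤ (k : ℕ) ∧ (k : ℕ) ≤ n - 2 then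
          D ⟨0, by omega⟩ ⟨(k : ℕ) - i, by have := k.isLt; omega⟩ else 0) := by
    intro i
    induction i with
    | zero => omega
    | succ m IH =>
      intro _ hi h2 k
      have hk := k.isLt
      rcases Nat.eq_zero_or_pos m with hm | hm
      · subst hm
        have h := HM0 0 (by omega) k
        simp only [zero_add, Nat.sub_zero] at h
        rw [h]
        split_ifs with h1 h2' <;> first | (exfalso; omega) | (push_cast; ring) | norm_num
      · have h := HM0 m (by omega) k
        rw [IH (by omega) (by omega) (by omega) ⟨(k : ℕ) - 1, by omega⟩] at h
        simp only [Fin.val_mk] at h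
        rw [h]
        by_cases hc : m + 1 ≤ (k : ℕ) ∧ (k : ℕ) ≤ n - 2
        · rw [if_pos hc, if_pos (show m + 1 ≤ (k : ℕ) ∧ (k : ℕ) + 2 ≤ n from by omega),
            if_pos (show 1 ≤ (k : ℕ) ∧ (k : ℕ) + 2 ≤ n from by omega),
            if_pos (show m ≤ (k : ℕ) - 1 ∧ (k : ℕ) - 1 ≤ n - 2 from by omega),
            fcg (D ⟨0, by omega⟩) (h' := by omega) (show (k : ℕ) - 1 - m = (k : ℕ) - (m + 1) from by omega),
            fcg (D ⟨0, by omega⟩) (h' := by omega) (show (k : ℕ) - m - 1 = (k : ℕ) - (m + 1) from by omega)]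
          push_cast
          ring
        · rw [if_neg hc]
          rw [if_neg (show ¬(m + 1 ≤ (k : ℕ) ∧ (k : ℕ) + 2 ≤ n) from by omega)]
          by_cases hc2 : 1 ≤ (k : ℕ) ∧ (k : ℕ) + 2 ≤ n
          · rw [if_pos hc2, if_neg (show ¬(m ≤ (k : ℕ) - 1 ∧ (k : ℕ) - 1 ≤ n - 2) from by omega)]
            ring
          · rw [if_neg hc2]; ring
  -- equation from eₙ·eₙ = e_{n-1}
  have HMnn : ∀ k : Fin n, D ⟨n - 2, by omega⟩ k
      = (if n - 1 + 1 = n ∧ (k : ℕ) + 2 = n then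
          D ⟨n - 1, by omega⟩ ⟨n - 1, by omega⟩ else 0) * 2 := by
    intro k
    have h := HM ⟨n - 1, by omega⟩ ⟨n - 1, by omega⟩ k
    simp only [EM, Fin.val_mk] at h
    rw [dif_neg (by omega), if_pos (show n - 1 + 1 = n ∧ n - 1 + 1 = n from by omega),
      if_neg (show ¬(n - 1 + 1 ≤ (k : ℕ) ∧ (k : ℕ) + 2 ≤ n) from by
        have := k.isLt; omega)] at h
    rw [h]; ring
  -- equation from e₁·eₙ = 0
  have HM0n : ∀ k : Fin n, (0 : ℂ)
      = (if n - 1 + 1 = n ∧ (k : ℕ) + 2 = n then D ⟨0, by omega⟩ ⟨n - 1, by omega⟩ else 0)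
      + (if 1 ≤ (k : ℕ) ∧ (k : ℕ) + 2 ≤ n then
          D ⟨n - 1, by omega⟩ ⟨(k : ℕ) - 1, by have := k.isLt; omega⟩ else 0) := by
    intro k
    have h := HM ⟨0, by omega⟩ ⟨n - 1, by omega⟩ k
    simp only [EM, Fin.val_mk] at h
    rw [dif_neg (by omega), if_neg (show ¬(0 + 1 = n ∧ n - 1 + 1 = n) from by omega),
      if_neg (show ¬(n - 1 + 1 ≤ (k : ℕ) ∧ (k : ℕ) + 2 ≤ n) from by
        have := k.isLt; omega),
      if_neg (show ¬(0 + 1 = n ∧ (k : ℕ) + 2 = n) from by omega)] at h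
    simp only [zero_add, add_zero, Nat.sub_zero] at h
    exact h
  -- equation from {e₁, eₙ} = e_{n-1}
  have HB0n : ∀ k : Fin n, D ⟨n - 2, by omega⟩ k
      = (if n - 1 + 1 = n ∧ (k : ℕ) + 2 = n then D ⟨0, by omega⟩ ⟨0, by omega⟩ else 0)
      + (if (k : ℕ) + 2 = n then
          D ⟨n - 1, by omega⟩ ⟨n - 1, by omega⟩ else 0) := by
    intro k
    have h := HB ⟨0, by omega⟩ ⟨n - 1, by omega⟩ k
    simp only [EB, Fin.val_mk] at h
    rw [if_pos (show True ∧ n - 1 + 1 = n from ⟨trivial, by omega⟩),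
      if_neg (show ¬((n : ℕ) - 1 = 0 ∧ (k : ℕ) + 2 = n) from by omega),
      if_neg (show ¬((0 : ℕ) + 1 = n ∧ (k : ℕ) + 2 = n) from by omega)] at h
    simp only [true_and, zero_add, add_zero] at h
    exact h
  have hXY : D ⟨n - 1, by omega⟩ ⟨n - 1, by omega⟩ = D ⟨0, by omega⟩ ⟨0, by omega⟩ := by
    have h1 := HMnn ⟨n - 2, by omega⟩
    have h2 := HB0n ⟨n - 2, by omega⟩
    simp only [Fin.val_mk] at h1 h2
    rw [if_pos (show n - 1 + 1 = n ∧ n - 2 + 2 = n from by omega)] at h1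
    rw [if_pos (show n - 1 + 1 = n ∧ n - 2 + 2 = n from by omega),
      if_pos (show n - 2 + 2 = n from by omega)] at h2
    linear_combination h2 - h1
  have hY0 : D ⟨0, by omega⟩ ⟨0, by omega⟩ = 0 := by
    have h1 := HMnn ⟨n - 2, by omega⟩
    simp only [Fin.val_mk] at h1
    rw [if_pos (show n - 1 + 1 = n ∧ n - 2 + 2 = n from by omega), hXY] at h1
    have h3 := Cmid (n - 2) (by omega) (by omega) (by omega) ⟨n - 2, by omega⟩
    simp only [Fin.val_mk] at h3
    rw [if_pos ⟨le_rfl, le_rfl⟩,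
      fcg (D ⟨0, by omega⟩) (h' := by omega) (show n - 2 - (n - 2) = 0 from by omega)] at h3
    have h4 := h3.symm.trans h1
    have h5 : ((n - 2 : ℕ) : ℂ) - 1 ≠ 0 := by
      have hrw : (n - 2 : ℕ) = (n - 3) + 1 := by omega
      rw [hrw]
      push_cast
      intro hcon
      have hz : ((n - 3 : ℕ) : ℂ) = 0 := by linear_combination hcon
      have := Nat.cast_eq_zero.mp hz
      omega
    have h6 : (((n - 2 : ℕ) : ℂ) - 1) * D ⟨0, by omega⟩ ⟨0, by omega⟩ = 0 := by
      linear_combination h4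
    rcases mul_eq_zero.mp h6 with h | h
    · exact absurd h h5
    · exact h
  have hX0 : D ⟨n - 1, by omega⟩ ⟨n - 1, by omega⟩ = 0 := hXY.trans hY0
  have hlastlow : ∀ j : Fin n, (j : ℕ) + 4 ≤ n → D ⟨n - 1, by omega⟩ j = 0 := by
    intro j hj
    have h := HM0n ⟨(j : ℕ) + 1, by omega⟩
    simp only [Fin.val_mk] at h
    rw [if_neg (show ¬(n - 1 + 1 = n ∧ (j : ℕ) + 1 + 2 = n) from by omega),
      if_pos (show 1 ≤ (j : ℕ) + 1 ∧ (j : ℕ) + 1 + 2 ≤ n from by omega),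
      fcg (D ⟨n - 1, by omega⟩) (h' := j.isLt) (show (j : ℕ) + 1 - 1 = (j : ℕ) from by omega),
      Fin.eta j j.isLt] at h
    simpa using h.symm
  have hlast3 : D ⟨n - 1, by omega⟩ ⟨n - 3, by omega⟩
      = -(D ⟨0, by omega⟩ ⟨n - 1, by omega⟩) := by
    have h := HM0n ⟨n - 2, by omega⟩
    simp only [Fin.val_mk] at h
    rw [if_pos (show n - 1 + 1 = n ∧ n - 2 + 2 = n from by omega),
      if_pos (show 1 ≤ n - 2 ∧ n - 2 + 2 ≤ n from by omega),
      fcg (D ⟨n - 1, by omega⟩) (h' := by omega) (show n - 2 - 1 = n - 3 from by omega)] at h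
    linear_combination -h
  -- assemble
  intro a k
  have hk := k.isLt; have ha' := a.isLt
  rcases tri hn a with ha | ha | ha
  · rw [DsolF_zero _ _ a k ha,
      show a = ⟨0, by omega⟩ from by apply Fin.ext; simp only [Fin.val_mk]; omega]
    by_cases h1 : 1 ≤ (k : ℕ)
    · rw [if_pos h1, dif_pos (show 2 ≤ (k : ℕ) + 1 ∧ (k : ℕ) + 1 ≤ n from by omega),
        fcg (D ⟨0, by omega⟩) (h' := hk) (show (k : ℕ) + 1 - 1 = (k : ℕ) from by omega),
        Fin.eta k hk]
    · rw [if_neg h1,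
        show k = ⟨0, by omega⟩ from by apply Fin.ext; simp only [Fin.val_mk]; omega]
      exact hY0
  · rw [DsolF_mid _ _ a k ha.1 ha.2]
    have hC := Cmid (a : ℕ) ha.1 (by omega) ha.2 k
    rw [Fin.eta] at hC
    rw [hC]
    by_cases h1 : (a : ℕ) + 1 ≤ (k : ℕ) ∧ (k : ℕ) ≤ n - 2
    · rw [if_pos (show (a : ℕ) ≤ (k : ℕ) ∧ (k : ℕ) ≤ n - 2 from by omega), if_pos h1,
        dif_pos (show 2 ≤ (k : ℕ) - (a : ℕ) + 1 ∧ (k : ℕ) - (a : ℕ) + 1 ≤ n from by omega),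
        fcg (D ⟨0, by omega⟩)
          (show (k : ℕ) - (a : ℕ) + 1 - 1 = (k : ℕ) - (a : ℕ) from by omega)]
    · rw [if_neg h1]
      by_cases h2 : (a : ℕ) ≤ (k : ℕ) ∧ (k : ℕ) ≤ n - 2
      · rw [if_pos h2, fcg (D ⟨0, by omega⟩) (h' := by omega) (show (k : ℕ) - (a : ℕ) = 0 from by omega), hY0]
      · rw [if_neg h2]
  · rw [DsolF_last _ _ a k hn ha,
      show a = ⟨n - 1, by omega⟩ from by apply Fin.ext; simp only [Fin.val_mk]; omega]
    rcases (show (k : ℕ) + 4 ≤ n ∨ (k : ℕ) = n - 3 ∨ (k : ℕ) = n - 2 ∨ (k : ℕ) = n - 1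
        from by omega) with hc | hc | hc | hc
    · rw [hlastlow k hc, if_neg (by omega), if_neg (by omega)]; ring
    · rw [show k = ⟨n - 3, by omega⟩ from by apply Fin.ext; simp only [Fin.val_mk]; omega,
        hlast3,
        if_pos (show (((⟨n - 3, by omega⟩ : Fin n)) : ℕ) = n - 3 from rfl),
        if_neg (show ¬(((⟨n - 3, by omega⟩ : Fin n)) : ℕ) = n - 2 from by
          simp only [Fin.val_mk]; omega),
        dif_pos (show 2 ≤ n ∧ n ≤ n from by omega)]
      ring
    · rw [show k = ⟨n - 2, by omega⟩ from by apply Fin.ext; simp only [Fin.val_mk]; omega,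
        if_neg (show ¬(((⟨n - 2, by omega⟩ : Fin n)) : ℕ) = n - 3 from by
          simp only [Fin.val_mk]; omega),
        if_pos (show (((⟨n - 2, by omega⟩ : Fin n)) : ℕ) = n - 2 from rfl)]
      ring
    · rw [show k = ⟨n - 1, by omega⟩ from by apply Fin.ext; simp only [Fin.val_mk]; omega,
        hX0,
        if_neg (show ¬(((⟨n - 1, by omega⟩ : Fin n)) : ℕ) = n - 3 from by
          simp only [Fin.val_mk]; omega),
        if_neg (show ¬(((⟨n - 1, by omega⟩ : Fin n)) : ℕ) = n - 2 from by
          simp only [Fin.val_mk]; omega)]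
      ring

lemma basisFun_eq_single (i : Fin n) : Pi.basisFun ℂ (Fin n) i = Pi.single i 1 := by
  simp [Pi.basisFun_apply]

lemma lift_bilinear (B : (Fin n → ℂ) →ₗ[ℂ] (Fin n → ℂ) →ₗ[ℂ] (Fin n → ℂ))
    (φ : (Fin n → ℂ) →ₗ[ℂ] (Fin n → ℂ))
    (h : ∀ a b : Fin n, φ (B (Pi.single a 1) (Pi.single b 1))
        = B (φ (Pi.single a 1)) (Pi.single b 1) + B (Pi.single a 1) (φ (Pi.single b 1))) :
    ∀ x y, φ (B x y) = B (φ x) y + B x (φ y) := by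
  have hB : B.compr₂ φ = B.comp φ + B.compl₂ φ := by
    apply LinearMap.ext_basis (Pi.basisFun ℂ (Fin n)) (Pi.basisFun ℂ (Fin n))
    intro i j
    simp only [basisFun_eq_single, LinearMap.compr₂_apply, LinearMap.add_apply,
      LinearMap.comp_apply, LinearMap.compl₂_apply]
    exact h i j
  intro x y
  have := congrArg (fun F : (Fin n → ℂ) →ₗ[ℂ] (Fin n → ℂ) →ₗ[ℂ] (Fin n → ℂ) => F x y) hB
  simpa only [LinearMap.compr₂_apply, LinearMap.add_apply, LinearMap.comp_apply,
    LinearMap.compl₂_apply] using this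

lemma char (hn : 3 < n) (φ : (Fin n → ℂ) →ₗ[ℂ] (Fin n → ℂ)) :
    ((∀ x y, φ (mu12 n x y) = mu12 n (φ x) y + mu12 n x (φ y)) ∧
     (∀ x y, φ (brB n x y) = brB n (φ x) y + brB n x (φ y)))
    ↔ ∃ (lam : ℕ → ℂ) (μ : ℂ), ∀ a k : Fin n,
        φ (Pi.single a 1) k = DsolF n lam μ a k := by
  constructor
  · rintro ⟨h1, h2⟩
    exact ⟨_, _, solve hn (fun i j => φ (Pi.single i 1) j)
      (fun a b => (mul_single_iff hn φ a b).mp (h1 _ _))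
      (fun a b => (br_single_iff hn φ a b).mp (h2 _ _))⟩
  · rintro ⟨lam, μ, hD⟩
    have hDeq : (fun i j => φ (Pi.single i 1) j) = DsolF n lam μ :=
      funext fun i => funext fun j => hD i j
    constructor
    · refine lift_bilinear (mu12 n) φ fun a b => ?_
      refine (mul_single_iff hn φ a b).mpr fun k => ?_
      rw [hDeq]
      exact verifyM hn lam μ a b k
    · refine lift_bilinear (brB n) φ fun a b => ?_
      refine (br_single_iff hn φ a b).mpr fun k => ?_
      rw [hDeq]
      exact verifyB hn lam μ a b k

def lamOf (n : ℕ) (v : Fin n → ℂ) : ℕ → ℂ :=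
  fun j => if h : 2 ≤ j ∧ j ≤ n then v ⟨j - 2, by omega⟩ else 0

lemma lamOf_add (v w : Fin n → ℂ) (j : ℕ) :
    lamOf n (v + w) j = lamOf n v j + lamOf n w j := by
  unfold lamOf; split_ifs <;> simp

lemma lamOf_smul (c : ℂ) (v : Fin n → ℂ) (j : ℕ) :
    lamOf n (c • v) j = c * lamOf n v j := by
  unfold lamOf; split_ifs <;> simp

lemma DsolF_add (L1 L2 : ℕ → ℂ) (μ1 μ2 : ℂ) (a k : Fin n) :
    DsolF n (fun j => L1 j + L2 j) (μ1 + μ2) a k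
      = DsolF n L1 μ1 a k + DsolF n L2 μ2 a k := by
  unfold DsolF; split_ifs <;> ring

lemma DsolF_smul (c : ℂ) (L : ℕ → ℂ) (μ : ℂ) (a k : Fin n) :
    DsolF n (fun j => c * L j) (c * μ) a k = c * DsolF n L μ a k := by
  unfold DsolF; split_ifs <;> ring

lemma DsolF_congr (hn : 3 < n) (L1 L2 : ℕ → ℂ) (μ1 μ2 : ℂ)
    (hL : ∀ j, 2 ≤ j → j ≤ n → L1 j = L2 j) (hμ : μ1 = μ2) (a k : Fin n) :
    DsolF n L1 μ1 a k = DsolF n L2 μ2 a k := by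
  have hk := k.isLt; have ha := a.isLt
  subst hμ
  unfold DsolF
  split_ifs <;> first | rfl | rw [hL _ (by omega) (by omega)]

noncomputable def Phi (hn : 3 < n) :
    (Fin n → ℂ) →ₗ[ℂ] ((Fin n → ℂ) →ₗ[ℂ] (Fin n → ℂ)) where
  toFun v := (Pi.basisFun ℂ (Fin n)).constr ℂ
    (fun a => fun k => DsolF n (lamOf n v) (v ⟨n - 1, (by omega : n > n - 1)⟩) a k)
  map_add' v w := by
    have hfam : (fun a => fun k => DsolF n (lamOf n (v + w)) ((v + w) ⟨n - 1, (by omega : n > n - 1)⟩) a k)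
        = (fun a => fun k => DsolF n (lamOf n v) (v ⟨n - 1, (by omega : n > n - 1)⟩) a k)
          + (fun a => fun k => DsolF n (lamOf n w) (w ⟨n - 1, (by omega : n > n - 1)⟩) a k) := by
      funext a k
      simp only [Pi.add_apply]
      rw [show lamOf n (v + w) = (fun j => lamOf n v j + lamOf n w j) from
          funext (lamOf_add v w)]
      exact DsolF_add _ _ _ _ a k
    rw [hfam, map_add]
  map_smul' c v := by
    have hfam : (fun a => fun k => DsolF n (lamOf n (c • v)) ((c • v) ⟨n - 1, (by omega : n > n - 1)⟩) a k)
        = c • (fun a => fun k => DsolF n (lamOf n v) (v ⟨n - 1, (by omega : n > n - 1)⟩) a k) := by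
      funext a k
      simp only [Pi.smul_apply, smul_eq_mul]
      rw [show lamOf n (c • v) = (fun j => c * lamOf n v j) from
          funext (lamOf_smul c v)]
      exact DsolF_smul c _ _ a k
    rw [hfam, map_smul]
    rfl

lemma Phi_single (hn : 3 < n) (v : Fin n → ℂ) (a : Fin n) :
    Phi hn v (Pi.single a 1)
      = fun k => DsolF n (lamOf n v) (v ⟨n - 1, (by omega : n > n - 1)⟩) a k := by
  rw [← basisFun_eq_single]
  exact (Pi.basisFun ℂ (Fin n)).constr_basis ℂ _ a

lemma row0_eval (lam : ℕ → ℂ) (μ : ℂ) (j : ℕ) (h1 : 1 ≤ j) (hlt : j < n) :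
    DsolF n lam μ ⟨0, (by omega : n > 0)⟩ ⟨j, hlt⟩ = lam (j + 1) := by
  rw [DsolF_zero _ _ _ _ rfl, if_pos (show 1 ≤ (((⟨j, hlt⟩ : Fin n)) : ℕ) from h1)]

lemma rowlast_eval (hn : 3 < n) (lam : ℕ → ℂ) (μ : ℂ) :
    DsolF n lam μ ⟨n - 1, (by omega : n > n - 1)⟩ ⟨n - 2, (by omega : n > n - 2)⟩ = μ := by
  rw [DsolF_last _ _ _ _ hn (by simp only [Fin.val_mk]; omega),
    if_neg (show ¬(((⟨n - 2, by omega⟩ : Fin n)) : ℕ) = n - 3 from by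
      simp only [Fin.val_mk]; omega),
    if_pos (show (((⟨n - 2, by omega⟩ : Fin n)) : ℕ) = n - 2 from rfl), zero_add]

lemma Phi_inj (hn : 3 < n) : Function.Injective (Phi hn) := by
  intro v w h
  have hf : ∀ a k : Fin n, DsolF n (lamOf n v) (v ⟨n - 1, by omega⟩) a k
      = DsolF n (lamOf n w) (w ⟨n - 1, by omega⟩) a k := by
    intro a k
    have hv := congrFun (Phi_single hn v a) k
    have hw := congrFun (Phi_single hn w a) k
    rw [← hv, ← hw, h]
  funext j
  have hj := j.isLt
  rcases Nat.lt_or_ge (j : ℕ) (n - 1) with hend | hend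
  · have h1 := hf ⟨0, by omega⟩ ⟨(j : ℕ) + 1, by omega⟩
    rw [row0_eval _ _ _ (by omega), row0_eval _ _ _ (by omega)] at h1
    unfold lamOf at h1
    rw [dif_pos (show 2 ≤ (j : ℕ) + 1 + 1 ∧ (j : ℕ) + 1 + 1 ≤ n from by omega),
      dif_pos (show 2 ≤ (j : ℕ) + 1 + 1 ∧ (j : ℕ) + 1 + 1 ≤ n from by omega)] at h1
    rw [fcg v (h' := hj) (show (j : ℕ) + 1 + 1 - 2 = (j : ℕ) from by omega),
      fcg w (h' := hj) (show (j : ℕ) + 1 + 1 - 2 = (j : ℕ) from by omega),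
      Fin.eta j hj] at h1
    exact h1
  · have hjn : j = ⟨n - 1, by omega⟩ := by apply Fin.ext; simp only [Fin.val_mk]; omega
    have h1 := hf ⟨n - 1, by omega⟩ ⟨n - 2, by omega⟩
    rw [rowlast_eval hn, rowlast_eval hn] at h1
    rw [hjn]
    exact h1

lemma range_Phi (hn : 3 < n) :
    LinearMap.range (Phi hn) = derivs (mu12 n) (brB n) := by
  apply le_antisymm
  · rintro φ ⟨v, rfl⟩
    exact (char hn _).mpr ⟨lamOf n v, v ⟨n - 1, by omega⟩,
      fun a k => congrFun (Phi_single hn v a) k⟩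
  · intro φ hφ
    obtain ⟨lam, μ, hD⟩ := (char hn φ).mp hφ
    refine ⟨(fun j : Fin n => if (j : ℕ) ≤ n - 2 then lam ((j : ℕ) + 2) else μ), ?_⟩
    apply Module.Basis.ext (Pi.basisFun ℂ (Fin n))
    intro i
    rw [basisFun_eq_single]
    funext k
    rw [congrFun (Phi_single hn _ i) k, hD i k]
    refine DsolF_congr hn _ _ _ _ (fun j h2 hjn => ?_) ?_ i k
    · unfold lamOf
      rw [dif_pos ⟨h2, hjn⟩]
      show (if ((⟨j - 2, _⟩ : Fin n) : ℕ) ≤ n - 2 then lam (((⟨j - 2, _⟩ : Fin n) : ℕ) + 2) else μ)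
        = lam j
      simp only [Fin.val_mk]
      rw [if_pos (by omega), show j - 2 + 2 = j from by omega]
    · show (if ((⟨n - 1, _⟩ : Fin n) : ℕ) ≤ n - 2 then lam (((⟨n - 1, _⟩ : Fin n) : ℕ) + 2) else μ)
        = μ
      simp only [Fin.val_mk]
      rw [if_neg (by omega)]

lemma sum_smul_single_apply (c : Fin n → ℂ) (j : Fin n) :
    (∑ k : Fin n, c k • (Pi.single k (1 : ℂ) : Fin n → ℂ)) j = c j := by
  rw [Finset.sum_apply]
  simp only [Pi.smul_apply, Pi.single_apply, smul_eq_mul, mul_ite, mul_one, mul_zero]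
  rw [Finset.sum_ite_eq Finset.univ j c, if_pos (Finset.mem_univ _)]

lemma translate (hn : 3 < n) (φ : (Fin n → ℂ) →ₗ[ℂ] (Fin n → ℂ)) :
    (∃ (lam : ℕ → ℂ) (μ : ℂ), ∀ a k : Fin n,
        φ (Pi.single a 1) k = DsolF n lam μ a k) ↔
    (∃ (lam : ℕ → ℂ) (μ : ℂ),
        φ (Pi.single (⟨0, (by omega : n > 0)⟩ : Fin n) 1) =
          ∑ k : Fin n, (if 1 ≤ (k : ℕ) then lam ((k : ℕ) + 1) else 0) •
            (Pi.single k (1 : ℂ) : Fin n → ℂ) ∧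
        (∀ a : Fin n, 1 ≤ (a : ℕ) → (a : ℕ) ≤ n - 2 →
          φ (Pi.single a 1) = (((a : ℕ) + 1 : ℕ) : ℂ) •
            ∑ k : Fin n,
              (if (a : ℕ) + 1 ≤ (k : ℕ) ∧ (k : ℕ) ≤ n - 2 then
                  lam ((k : ℕ) - (a : ℕ) + 1) else 0) •
                (Pi.single k (1 : ℂ) : Fin n → ℂ)) ∧
        φ (Pi.single (⟨n - 1, (by omega : n > n - 1)⟩ : Fin n) 1) =
          (- lam n) • (Pi.single (⟨n - 3, (by omega : n > n - 3)⟩ : Fin n) (1 : ℂ) : Fin n → ℂ) +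
          μ • (Pi.single (⟨n - 2, (by omega : n > n - 2)⟩ : Fin n) (1 : ℂ) : Fin n → ℂ)) := by
  apply exists_congr; intro lam; apply exists_congr; intro μ
  constructor
  · intro h
    refine ⟨?_, ?_, ?_⟩
    · funext j
      rw [sum_smul_single_apply, h _ j, DsolF_zero _ _ _ _ rfl]
    · intro a h1 h2
      funext j
      have hj := j.isLt
      rw [Pi.smul_apply, sum_smul_single_apply, h a j, DsolF_mid _ _ a j h1 h2,
        smul_eq_mul]
      push_cast
      ring
    · funext j
      have hj := j.isLt
      rw [h _ j, DsolF_last _ _ _ _ hn (by simp only [Fin.val_mk]; omega)]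
      simp only [Pi.add_apply, Pi.smul_apply, Pi.single_apply, smul_eq_mul,
        Fin.ext_iff, Fin.val_mk]
      split_ifs <;> first | (exfalso; omega) | ring
  · rintro ⟨h0, hmid, hlast⟩
    intro a k
    have hk := k.isLt; have ha' := a.isLt
    rcases tri hn a with ha | ha | ha
    · rw [show a = ⟨0, by omega⟩ from by apply Fin.ext; simp only [Fin.val_mk]; omega,
        congrFun h0 k, sum_smul_single_apply, DsolF_zero _ _ _ _ rfl]
    · rw [congrFun (hmid a ha.1 ha.2) k, Pi.smul_apply, sum_smul_single_apply,
        DsolF_mid _ _ a k ha.1 ha.2, smul_eq_mul]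
      push_cast
      ring
    · rw [show a = ⟨n - 1, by omega⟩ from by apply Fin.ext; simp only [Fin.val_mk]; omega,
        congrFun hlast k, DsolF_last _ _ _ _ hn (by simp only [Fin.val_mk]; omega)]
      simp only [Pi.add_apply, Pi.smul_apply, Pi.single_apply, smul_eq_mul,
        Fin.ext_iff, Fin.val_mk]
      split_ifs <;> first | (exfalso; omega) | ring

end P15

/-- For n > 3, the derivations of `P₁,₅ⁿ` form a Lie algebra of dimension `n`,
and `φ` is a derivation iff there are `λ₂,…,λₙ, μ ∈ ℂ` with
`φ(e₁) = ∑_{k=2}^{n} λ_k e_k`, `φ(e_i) = i ∑_{k=i+1}^{n−1} λ_{k−i+1} e_k`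
for `2 ≤ i ≤ n−1`, and `φ(eₙ) = −λₙ e_{n−2} + μ e_{n−1}`. -/
theorem stmt14 (n : ℕ) (hn : 3 < n) :
    Module.finrank ℂ ↥(derivs (mu12 n) (brB n)) = n ∧
    ∀ φ : (Fin n → ℂ) →ₗ[ℂ] (Fin n → ℂ),
      ((∀ x y, φ (mu12 n x y) = mu12 n (φ x) y + mu12 n x (φ y)) ∧
       (∀ x y, φ (brB n x y) = brB n (φ x) y + brB n x (φ y))) ↔
      ∃ (lam : ℕ → ℂ) (μ : ℂ),
        φ (Pi.single (⟨0, by omega⟩ : Fin n) 1) =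
          ∑ k : Fin n, (if 1 ≤ (k : ℕ) then lam ((k : ℕ) + 1) else 0) •
            (Pi.single k (1 : ℂ) : Fin n → ℂ) ∧
        (∀ a : Fin n, 1 ≤ (a : ℕ) → (a : ℕ) ≤ n - 2 →
          φ (Pi.single a 1) = (((a : ℕ) + 1 : ℕ) : ℂ) •
            ∑ k : Fin n,
              (if (a : ℕ) + 1 ≤ (k : ℕ) ∧ (k : ℕ) ≤ n - 2 then
                  lam ((k : ℕ) - (a : ℕ) + 1) else 0) •
                (Pi.single k (1 : ℂ) : Fin n → ℂ)) ∧
        φ (Pi.single (⟨n - 1, by omega⟩ : Fin n) 1) =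
          (- lam n) • (Pi.single (⟨n - 3, by omega⟩ : Fin n) (1 : ℂ) : Fin n → ℂ) +
          μ • (Pi.single (⟨n - 2, by omega⟩ : Fin n) (1 : ℂ) : Fin n → ℂ) := by
  constructor
  · rw [← P15.range_Phi hn, LinearMap.finrank_range_of_inj (P15.Phi_inj hn)]
    exact Module.finrank_fin_fun ℂ
  · intro φ
    exact (P15.char hn φ).trans (P15.translate hn φ)
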